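/- arXiv:2202.14022 — 6 statements merged into one kernel-verified Lean document; each statement's English description precedes it below -/
import Mathlib

section
/- Let X be an infinite set, ℱ a non-principal ultrafilter on X, and A a local ring of finite cardinality with maximal ideal 𝔪. Let f : (∏_{α∈X} A)_ℱ → A be the unique ring isomorphism such that {α : x_α = f([(x_α)])} ∈ ℱ for all (x_α), and let π : ∏_{α∈X} A → A be the composite of the quotient map to the ultraproduct with f. Then π is a localisation of ∏_{α∈X} A at the complement of the prime ideal π^{-1}(𝔪): every element of ∏_{α∈X} A outside π^{-1}(𝔪) is mapped by π to a unit of A, and every ring homomorphism g : ∏_{α∈X} A → B that sends the complement of π^{-1}(𝔪) into the units of B factors uniquely through π. -/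
open Filter IsLocalRing

universe u

/-- Let ℱ be a non-principal ultrafilter on an infinite set X and A a local
ring of finite cardinality with maximal ideal 𝔪.  Let f be the ring isomorphism from the
ultraproduct of the constant family A to A characterised by the ultrafilter condition, and let
π be the composite of the quotient map with f.  Then π is a localisation of the product ring
∏ A at the complement of π⁻¹(𝔪): elements outside π⁻¹(𝔪) map to units, and every ring
homomorphism sending the complement of π⁻¹(𝔪) to units factors uniquely through π. -/
theorem ultraproduct_finite_local_ring_localisation
    {X : Type*} [Infinite X] (ℱ : Ultrafilter X) (hℱ : ∀ x : X, ℱ ≠ pure x)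
    (A : Type*) [CommRing A] [IsLocalRing A] [Finite A]
    (f : Filter.Germ (ℱ : Filter X) A ≃+* A)
    (hf : ∀ x : X → A, {α | x α = f (↑x : Filter.Germ (ℱ : Filter X) A)} ∈ ℱ)
    (π : (X → A) →+* A)
    (hπ : π = (f : Filter.Germ (ℱ : Filter X) A →+* A).comp
      (Filter.Germ.coeRingHom (ℱ : Filter X))) :
    (∀ x : X → A, π x ∉ maximalIdeal A → IsUnit (π x)) ∧
      ∀ (B : Type u) [CommRing B] (g : (X → A) →+* B),
        (∀ x : X → A, π x ∉ maximalIdeal A → IsUnit (g x)) →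
          ∃! h : A →+* B, h.comp π = g := by
  have hπapp : ∀ x : X → A, π x = f (↑x : Filter.Germ (ℱ : Filter X) A) := by
    intro x; simp [hπ, Filter.Germ.coeRingHom]; rfl
  -- π (const a) = a
  have hconst : ∀ a : A, π (Function.const X a) = a := by
    intro a
    obtain ⟨α, hα⟩ := Filter.nonempty_of_mem (hf (Function.const X a))
    rw [hπapp]
    exact hα.symm
  -- elements of ker π are killed by any g as in the statement
  have hker : ∀ (B : Type u) [CommRing B] (g : (X → A) →+* B),
      (∀ y : X → A, π y ∉ maximalIdeal A → IsUnit (g y)) →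
      ∀ x : X → A, π x = 0 → g x = 0 := by
    intro B _ g hg x hx
    have hmem : {α | x α = 0} ∈ ℱ := by
      rw [hπapp] at hx
      have h0 : (↑x : Filter.Germ (ℱ : Filter X) A) = ↑(0 : X → A) := by
        apply f.injective
        simpa using hx
      exact Filter.Germ.coe_eq.mp h0
    classical
    set e : X → A := fun α => if x α = 0 then 0 else 1 with he
    have hex : e * x = x := by
      funext α
      by_cases h : x α = 0 <;> simp [he, h]
    have hπe : π e = 0 := by
      rw [hπapp]
      have : (↑e : Filter.Germ (ℱ : Filter X) A) = ↑(0 : X → A) := by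
        apply Filter.Germ.coe_eq.mpr
        filter_upwards [hmem] with α hα
        simp [he, hα]
      rw [this]
      simpa using (hπapp 0).symm.trans (map_zero π)
    have hunit : IsUnit (g (1 - e)) := by
      apply hg
      rw [map_sub, map_one, hπe, sub_zero]
      intro hmem1
      exact (IsLocalRing.maximalIdeal.isMaximal A).ne_top (Ideal.eq_top_of_isUnit_mem _ hmem1 isUnit_one)
    have hz : (1 - e) * x = 0 := by
      rw [sub_mul, one_mul, hex, sub_self]
    have : g (1 - e) * g x = 0 := by
      rw [← map_mul, hz, map_zero]
    obtain ⟨u, hu⟩ := hunit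
    calc g x = ↑u⁻¹ * (g (1 - e) * g x) := by rw [← hu]; simp [← mul_assoc]
    _ = 0 := by rw [this, mul_zero]
  constructor
  · intro x hx
    rw [IsLocalRing.mem_maximalIdeal, mem_nonunits_iff, not_not] at hx
    exact hx
  · intro B _ g hg
    refine ⟨g.comp (Pi.constRingHom X A), ?_, ?_⟩
    · ext x
      have h0 : π (Function.const X (π x) - x) = 0 := by
        rw [map_sub, hconst, sub_self]
      have := hker B g hg _ h0
      rw [map_sub, sub_eq_zero] at this
      exact this
    · intro h' hh'
      ext a
      have := DFunLike.congr_fun hh' (Function.const X a)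
      simp only [RingHom.comp_apply, hconst] at this
      exact this
end

section
/- Let X be an infinite set, ℱ a non-principal ultrafilter on X, A a ring of finite cardinality, and (M_α)_{α∈X} a bounded family of A-modules (i.e. there is an integer s such that every M_α is a quotient of A^s). Then there exists a set S ∈ ℱ such that for every α₀ ∈ S the ultraproduct (∏_{α∈X} M_α)_ℱ is isomorphic as an A-module to M_{α₀}. In particular such an α₀ exists. -/
open Filter

section Ultra

variable {X : Type*} (ℱ : Ultrafilter X) (A : Type*) [Ring A]

/-- The submodule of families vanishing on a set of the ultrafilter. -/
def ultraZero (M : X → Type*) [∀ α, AddCommGroup (M α)] [∀ α, Module A (M α)] :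
    Submodule A (∀ α, M α) where
  carrier := {x | ∀ᶠ α in (ℱ : Filter X), x α = 0}
  add_mem' := by
    intro a b ha hb
    filter_upwards [ha, hb] with α h1 h2
    simp [h1, h2]
  zero_mem' := Filter.Eventually.of_forall fun _ => rfl
  smul_mem' := by
    intro c x hx
    filter_upwards [hx] with α h
    simp [h]

lemma mem_ultraZero {M : X → Type*} [∀ α, AddCommGroup (M α)] [∀ α, Module A (M α)]
    {x : ∀ α, M α} :
    x ∈ ultraZero ℱ A M ↔ ∀ᶠ α in (ℱ : Filter X), x α = 0 := Iff.rfl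

/-- The ultraproduct of a family of `A`-modules along the ultrafilter `ℱ`. -/
abbrev Ultraproduct (M : X → Type*) [∀ α, AddCommGroup (M α)] [∀ α, Module A (M α)] :=
  (∀ α, M α) ⧸ ultraZero ℱ A M

/-- The map induced on ultraproducts by a family of linear maps. -/
def ultraMap {M N : X → Type*} [∀ α, AddCommGroup (M α)] [∀ α, Module A (M α)]
    [∀ α, AddCommGroup (N α)] [∀ α, Module A (N α)] (f : ∀ α, M α →ₗ[A] N α) :
    Ultraproduct ℱ A M →ₗ[A] Ultraproduct ℱ A N :=
  Submodule.mapQ _ _ (LinearMap.pi fun α => (f α).comp (LinearMap.proj α)) <| by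
    intro x hx
    simp only [Submodule.mem_comap]
    rw [mem_ultraZero]
    filter_upwards [hx] with α h
    simp [h]

lemma ultraMap_mk {M N : X → Type*} [∀ α, AddCommGroup (M α)] [∀ α, Module A (M α)]
    [∀ α, AddCommGroup (N α)] [∀ α, Module A (N α)] (f : ∀ α, M α →ₗ[A] N α)
    (x : ∀ α, M α) :
    ultraMap ℱ A f (Submodule.Quotient.mk x) =
      Submodule.Quotient.mk (fun α => f α (x α)) := by
  simp [ultraMap, Submodule.mapQ_apply]
  rfl

end Ultra


section Aux

open Filter

/-- On a finite codomain, a function is eventually constant along an ultrafilter. -/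
lemma ultra_const {X Y : Type*} [Finite Y] (ℱ : Ultrafilter X) (g : X → Y) :
    ∃ y, ∀ᶠ α in (ℱ : Filter X), g α = y := by
  have : (⋃ y ∈ (Set.univ : Set Y), g ⁻¹' {y}) ∈ ℱ := by
    have : (⋃ y ∈ (Set.univ : Set Y), g ⁻¹' {y}) = Set.univ := by
      ext x; simp
    rw [this]; exact Filter.univ_mem
  rcases (Ultrafilter.finite_biUnion_mem_iff Set.finite_univ).mp this with ⟨y, -, hy⟩
  exact ⟨y, hy⟩

/-- The constant ultrapower of a finite module is isomorphic to the module itself. -/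
noncomputable def ultraConstEquiv {X : Type*} [Nonempty X] (ℱ : Ultrafilter X)
    (A : Type*) [Ring A] (N : Type*) [AddCommGroup N] [Module A N] [Finite N] :
    Ultraproduct ℱ A (fun _ : X => N) ≃ₗ[A] N := by
  refine (LinearEquiv.ofBijective
    ((ultraZero ℱ A (fun _ : X => N)).mkQ.comp
      (LinearMap.pi (fun _ => LinearMap.id))) ⟨?_, ?_⟩).symm
  · intro a b hab
    rw [LinearMap.comp_apply, LinearMap.comp_apply] at hab
    have := (Submodule.Quotient.eq _).mp hab
    rw [mem_ultraZero] at this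
    rcases Filter.nonempty_of_mem this with ⟨α, hα⟩
    simpa [sub_eq_zero] using hα
  · intro y
    obtain ⟨x, rfl⟩ := Submodule.Quotient.mk_surjective _ y
    obtain ⟨n, hn⟩ := ultra_const ℱ x
    refine ⟨n, ?_⟩
    rw [LinearMap.comp_apply, Submodule.mkQ_apply]
    refine (Submodule.Quotient.eq _).mpr ?_
    rw [mem_ultraZero]
    filter_upwards [hn] with α hα
    simp [LinearMap.pi_apply, hα]

/-- Families of maps that are almost-everywhere mutually inverse induce an equivalence
of ultraproducts. -/
noncomputable def ultraEquivOfAE {X : Type*} (ℱ : Ultrafilter X) (A : Type*) [Ring A]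
    {M N : X → Type*} [∀ α, AddCommGroup (M α)] [∀ α, Module A (M α)]
    [∀ α, AddCommGroup (N α)] [∀ α, Module A (N α)]
    (g : ∀ α, M α →ₗ[A] N α) (h : ∀ α, N α →ₗ[A] M α)
    (h1 : ∀ᶠ α in (ℱ : Filter X), ∀ m, h α (g α m) = m)
    (h2 : ∀ᶠ α in (ℱ : Filter X), ∀ n, g α (h α n) = n) :
    Ultraproduct ℱ A M ≃ₗ[A] Ultraproduct ℱ A N := by
  refine LinearEquiv.ofLinear (ultraMap ℱ A g) (ultraMap ℱ A h) ?_ ?_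
  · apply LinearMap.ext; intro y
    obtain ⟨x, rfl⟩ := Submodule.Quotient.mk_surjective _ y
    rw [LinearMap.comp_apply, ultraMap_mk, ultraMap_mk, LinearMap.id_apply]
    refine (Submodule.Quotient.eq _).mpr ?_
    rw [mem_ultraZero]
    filter_upwards [h2] with α hα
    simp [hα]
  · apply LinearMap.ext; intro y
    obtain ⟨x, rfl⟩ := Submodule.Quotient.mk_surjective _ y
    rw [LinearMap.comp_apply, ultraMap_mk, ultraMap_mk, LinearMap.id_apply]
    refine (Submodule.Quotient.eq _).mpr ?_
    rw [mem_ultraZero]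
    filter_upwards [h1] with α hα
    simp [hα]

end Aux

/-- The ultraproduct of a bounded family of modules over a finite ring is
isomorphic to a member of the family; indeed to any member indexed by some set of
the ultrafilter. -/
theorem ultraproduct_of_bounded_family_isomorphic_to_member
    {X : Type*} [Infinite X] (ℱ : Ultrafilter X) (hℱ : ∀ x : X, ℱ ≠ pure x)
    (A : Type*) [Ring A] [Finite A]
    (M : X → Type*) [∀ α, AddCommGroup (M α)] [∀ α, Module A (M α)]
    (s : ℕ) (hbdd : ∀ α, ∃ f : (Fin s → A) →ₗ[A] M α, Function.Surjective f) :
    (∃ S ∈ ℱ, ∀ α₀ ∈ S, Nonempty (Ultraproduct ℱ A M ≃ₗ[A] M α₀)) ∧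
      ∃ α₀ : X, Nonempty (Ultraproduct ℱ A M ≃ₗ[A] M α₀) := by
  classical
  choose f hf using hbdd
  haveI : Finite (Submodule A (Fin s → A)) :=
    Finite.of_injective _ SetLike.coe_injective
  obtain ⟨K, hK⟩ := ultra_const ℱ (fun α => LinearMap.ker (f α))
  set N := (Fin s → A) ⧸ K with hN
  haveI : Finite N := Quotient.finite _
  -- isomorphism `N ≃ M α` whenever the kernel equals `K`
  have e : ∀ α, LinearMap.ker (f α) = K → (N ≃ₗ[A] M α) := fun α hα =>
    (Submodule.quotEquivOfEq K (LinearMap.ker (f α)) hα.symm).trans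
      ((f α).quotKerEquivOfSurjective (hf α))
  set g : ∀ α, M α →ₗ[A] N := fun α =>
    if hα : LinearMap.ker (f α) = K then ((e α hα).symm : M α →ₗ[A] N) else 0 with hg
  set h : ∀ α, N →ₗ[A] M α := fun α =>
    if hα : LinearMap.ker (f α) = K then ((e α hα) : N →ₗ[A] M α) else 0 with hh
  have h1 : ∀ᶠ α in (ℱ : Filter X), ∀ m, h α (g α m) = m := by
    filter_upwards [hK] with α hα
    intro m
    simp [hg, hh, hα]
  have h2 : ∀ᶠ α in (ℱ : Filter X), ∀ n, g α (h α n) = n := by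
    filter_upwards [hK] with α hα
    intro n
    simp [hg, hh, hα]
  have E : Ultraproduct ℱ A M ≃ₗ[A] N :=
    (ultraEquivOfAE ℱ A g h h1 h2).trans (ultraConstEquiv ℱ A N)
  have main : ∀ α₀, LinearMap.ker (f α₀) = K →
      Nonempty (Ultraproduct ℱ A M ≃ₗ[A] M α₀) := fun α₀ hα₀ => ⟨E.trans (e α₀ hα₀)⟩
  rcases Filter.nonempty_of_mem hK with ⟨α₀, hα₀⟩
  exact ⟨⟨{α | LinearMap.ker (f α) = K}, hK, fun α hα => main α hα⟩, ⟨α₀, main α₀ hα₀⟩⟩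
end

section
/- Let R be a complete Noetherian local ring with maximal ideal 𝔪 and finite residue field, X an infinite set, and ℱ a non-principal ultrafilter on X. If M is a finitely generated R-module, then the natural map M → Patch_R((M)_{α∈X}) = lim_{n} (∏_{α∈X} M/𝔪^n M)_ℱ, induced by the diagonal maps M → ∏_{α∈X} M/𝔪^n M, is an isomorphism of R-modules. In other words, the patching module of the constant family with value M is isomorphic to M. -/
open Filter IsLocalRing

section SeqLimit

variable (R : Type*) [CommRing R]

/-- The inverse limit of a sequence of modules, realised as a submodule of the product. -/
def seqLimit (P : ℕ → Type*) [∀ n, AddCommGroup (P n)] [∀ n, Module R (P n)]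
    (g : ∀ n, P (n + 1) →ₗ[R] P n) : Submodule R (∀ n, P n) where
  carrier := {x | ∀ n, g n (x (n + 1)) = x n}
  add_mem' := by
    intro a b ha hb n
    simp [ha n, hb n]
  zero_mem' := by intro n; simp
  smul_mem' := by
    intro c x hx n
    simp [hx n]

end SeqLimit

section Patch

variable (R : Type*) [CommRing R] [IsLocalRing R]

/-- The submodule 𝔪ⁿ•M of a module M. -/
abbrev mPow (n : ℕ) (M : Type*) [AddCommGroup M] [Module R M] : Submodule R M :=
  (maximalIdeal R ^ n) • (⊤ : Submodule R M)

/-- The quotient M/𝔪ⁿM. -/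
abbrev ModQuot (n : ℕ) (M : Type*) [AddCommGroup M] [Module R M] :=
  M ⧸ mPow R n M

lemma mPow_succ_le (n : ℕ) (M : Type*) [AddCommGroup M] [Module R M] :
    mPow R (n + 1) M ≤ mPow R n M :=
  Submodule.smul_mono_left (Ideal.pow_le_pow_right n.le_succ)

/-- The reduction map M/𝔪ⁿ⁺¹M → M/𝔪ⁿM. -/
def quotTrans (n : ℕ) (M : Type*) [AddCommGroup M] [Module R M] :
    ModQuot R (n + 1) M →ₗ[R] ModQuot R n M :=
  Submodule.mapQ _ _ LinearMap.id <| by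
    intro x hx
    simpa using mPow_succ_le R n M hx

lemma quotTrans_mk (n : ℕ) (M : Type*) [AddCommGroup M] [Module R M] (x : M) :
    quotTrans R n M (Submodule.Quotient.mk x) = Submodule.Quotient.mk x := by
  simp [quotTrans, Submodule.mapQ_apply]

variable {X : Type*} (ℱ : Ultrafilter X)

/-- The n-th level of the patching construction: the ultraproduct of the quotients M α/𝔪ⁿ. -/
abbrev UP (M : X → Type*) [∀ α, AddCommGroup (M α)] [∀ α, Module R (M α)] (n : ℕ) :=
  Ultraproduct ℱ R (fun α => ModQuot R n (M α))

/-- The transition maps between the levels of the patching construction. -/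
def upTrans (M : X → Type*) [∀ α, AddCommGroup (M α)] [∀ α, Module R (M α)] (n : ℕ) :
    UP R ℱ M (n + 1) →ₗ[R] UP R ℱ M n :=
  ultraMap ℱ R (fun α => quotTrans R n (M α))

/-- The patching module of a family of R-modules: the inverse limit over n of the
ultraproducts of the quotients M α/𝔪ⁿ. -/
def PatchS (M : X → Type*) [∀ α, AddCommGroup (M α)] [∀ α, Module R (M α)] :
    Submodule R (∀ n, UP R ℱ M n) :=
  seqLimit R (fun n => UP R ℱ M n) (fun n => upTrans R ℱ M n)

lemma mem_PatchS {M : X → Type*} [∀ α, AddCommGroup (M α)] [∀ α, Module R (M α)]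
    {x : ∀ n, UP R ℱ M n} :
    x ∈ PatchS R ℱ M ↔ ∀ n, upTrans R ℱ M n (x (n + 1)) = x n := Iff.rfl

-- functoriality of ModQuot
lemma mapQ_cond {M N : Type*} [AddCommGroup M] [Module R M] [AddCommGroup N] [Module R N]
    (f : M →ₗ[R] N) (n : ℕ) : mPow R n M ≤ (mPow R n N).comap f := by
  rw [← Submodule.map_le_iff_le_comap, Submodule.map_smul'']
  exact Submodule.smul_mono le_rfl le_top

/-- The map induced by f : M →ₗ N on the quotients modulo 𝔪ⁿ. -/
def modQuotMap (n : ℕ) {M N : Type*} [AddCommGroup M] [Module R M] [AddCommGroup N]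
    [Module R N] (f : M →ₗ[R] N) : ModQuot R n M →ₗ[R] ModQuot R n N :=
  Submodule.mapQ _ _ f (mapQ_cond R f n)

lemma modQuotMap_mk (n : ℕ) {M N : Type*} [AddCommGroup M] [Module R M] [AddCommGroup N]
    [Module R N] (f : M →ₗ[R] N) (x : M) :
    modQuotMap R n f (Submodule.Quotient.mk x) = Submodule.Quotient.mk (f x) := by
  simp [modQuotMap, Submodule.mapQ_apply]

lemma quotTrans_modQuotMap {M N : Type*} [AddCommGroup M] [Module R M] [AddCommGroup N]
    [Module R N] (f : M →ₗ[R] N) (n : ℕ) (q : ModQuot R (n + 1) M) :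
    quotTrans R n N (modQuotMap R (n + 1) f q) = modQuotMap R n f (quotTrans R n M q) := by
  obtain ⟨z, rfl⟩ := Submodule.Quotient.mk_surjective _ q
  rw [modQuotMap_mk, quotTrans_mk, quotTrans_mk, modQuotMap_mk]

lemma level_compat {M N : X → Type*} [∀ α, AddCommGroup (M α)] [∀ α, Module R (M α)]
    [∀ α, AddCommGroup (N α)] [∀ α, Module R (N α)] (f : ∀ α, M α →ₗ[R] N α) (n : ℕ)
    (u : UP R ℱ M (n + 1)) :
    upTrans R ℱ N n (ultraMap ℱ R (fun α => modQuotMap R (n + 1) (f α)) u) =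
      ultraMap ℱ R (fun α => modQuotMap R n (f α)) (upTrans R ℱ M n u) := by
  obtain ⟨y, rfl⟩ := Submodule.Quotient.mk_surjective _ u
  simp only [upTrans]
  rw [ultraMap_mk, ultraMap_mk, ultraMap_mk, ultraMap_mk]
  exact congrArg _ (funext fun α => quotTrans_modQuotMap R (f α) n (y α))

/-- The map induced on patching modules by a family of linear maps. -/
def patchMap {M N : X → Type*} [∀ α, AddCommGroup (M α)] [∀ α, Module R (M α)]
    [∀ α, AddCommGroup (N α)] [∀ α, Module R (N α)] (f : ∀ α, M α →ₗ[R] N α) :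
    ↥(PatchS R ℱ M) →ₗ[R] ↥(PatchS R ℱ N) :=
  LinearMap.codRestrict _
    ((LinearMap.pi fun n =>
        (ultraMap ℱ R fun α => modQuotMap R n (f α)).comp (LinearMap.proj n)).comp
      (PatchS R ℱ M).subtype)
    (by
      intro x
      rw [mem_PatchS]
      intro n
      simp only [LinearMap.comp_apply, LinearMap.pi_apply, LinearMap.proj_apply,
        Submodule.subtype_apply]
      rw [level_compat, x.2 n])

end Patch

section Diag

variable (R : Type*) [CommRing R] [IsLocalRing R] {X : Type*} (ℱ : Ultrafilter X)

/-- The natural map from a module to the patching module of the constant family. -/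
def patchDiag (M : Type*) [AddCommGroup M] [Module R M] :
    M →ₗ[R] ↥(PatchS R ℱ (fun _ : X => M)) :=
  LinearMap.codRestrict _
    (LinearMap.pi fun n => (ultraZero ℱ R (fun _ : X => ModQuot R n M)).mkQ.comp
        (LinearMap.pi fun _ : X => (mPow R n M).mkQ))
    (by
      intro m
      rw [mem_PatchS]
      intro n
      simp only [LinearMap.pi_apply, LinearMap.comp_apply, Submodule.mkQ_apply]
      rw [upTrans, ultraMap_mk]
      exact congrArg _ (funext fun α => quotTrans_mk R n M m))

end Diag

section AuxProof

open Submodule AdicCompletion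

/-- A module with a finite submodule with finite quotient is finite. -/
lemma aux_finite_of_finite_quot {R W : Type*} [Ring R] [AddCommGroup W] [Module R W]
    (p : Submodule R W) [Finite p] [Finite (W ⧸ p)] : Finite W := by
  choose s hs using Submodule.Quotient.mk_surjective p
  have hinj : Function.Injective (fun w : W =>
      ((Submodule.Quotient.mk w : W ⧸ p),
        (⟨w - s (Submodule.Quotient.mk w),
          (Submodule.Quotient.eq p).mp (by rw [hs])⟩ : p))) := by
    intro a b h
    have h1 : (Submodule.Quotient.mk a : W ⧸ p) = Submodule.Quotient.mk b :=
      congrArg Prod.fst h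
    have h2 : a - s (Submodule.Quotient.mk a) = b - s (Submodule.Quotient.mk b) :=
      congrArg (fun z => ((Prod.snd z : p) : W)) h
    rw [h1] at h2
    exact sub_left_inj.mp h2
  exact Finite.of_injective _ hinj

lemma aux_smul_quot_eq_zero {R : Type*} [CommRing R] {N : Type*} [AddCommGroup N] [Module R N]
    {I : Ideal R} {r : R} (hr : r ∈ I) (x : N ⧸ (I • ⊤ : Submodule R N)) : r • x = 0 := by
  obtain ⟨y, rfl⟩ := Submodule.Quotient.mk_surjective _ x
  rw [← Submodule.Quotient.mk_smul, Submodule.Quotient.mk_eq_zero]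
  exact Submodule.smul_mem_smul hr mem_top

lemma aux_finite_quot_smul (R : Type*) [CommRing R] [IsLocalRing R]
    [Finite (IsLocalRing.ResidueField R)] (N : Type*) [AddCommGroup N] [Module R N]
    [Module.Finite R N] :
    Finite (N ⧸ (maximalIdeal R • ⊤ : Submodule R N)) := by
  set Q := N ⧸ (maximalIdeal R • ⊤ : Submodule R N) with hQ
  obtain ⟨t, ht⟩ := Module.Finite.fg_top (R := R) (M := Q)
  choose lift hlift using Ideal.Quotient.mk_surjective (I := maximalIdeal R)
  have hsurj : Function.Surjective (fun d : (↥t → IsLocalRing.ResidueField R) =>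
      (∑ i : ↥t, lift (d i) • (i : Q))) := by
    intro q
    have hq : q ∈ span R (↑t : Set Q) := ht ▸ mem_top
    obtain ⟨f, hf⟩ := mem_span_finset.mp hq
    refine ⟨fun i => IsLocalRing.residue R (f i), ?_⟩
    rw [← hf.2, ← Finset.sum_coe_sort t (fun i => f i • i)]
    refine Finset.sum_congr rfl fun i _ => ?_
    have hmem : lift (IsLocalRing.residue R (f ↑i)) - f ↑i ∈ maximalIdeal R := by
      have : Ideal.Quotient.mk (maximalIdeal R) (lift (IsLocalRing.residue R (f ↑i)) - f ↑i)
          = 0 := by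
        rw [map_sub, sub_eq_zero]
        exact hlift _
      exact Ideal.Quotient.eq_zero_iff_mem.mp this
    have hz : (lift (IsLocalRing.residue R (f ↑i)) - f ↑i) • (i : Q) = 0 :=
      aux_smul_quot_eq_zero hmem _
    rw [sub_smul, sub_eq_zero] at hz
    exact hz
  exact Finite.of_surjective _ hsurj

lemma aux_finite_modQuot (R : Type*) [CommRing R] [IsLocalRing R] [IsNoetherianRing R]
    [Finite (IsLocalRing.ResidueField R)] (M : Type*) [AddCommGroup M] [Module R M]
    [Module.Finite R M] (n : ℕ) : Finite (ModQuot R n M) := by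
  induction n with
  | zero =>
      have htop : mPow R 0 M = ⊤ := by
        simp [mPow]
      have : Subsingleton (ModQuot R 0 M) :=
        Submodule.Quotient.subsingleton_iff.mpr htop
      exact Finite.of_subsingleton
  | succ n ih =>
      set A := mPow R n M with hA
      set B := mPow R (n + 1) M with hB
      have hBA : B ≤ A := mPow_succ_le R n M
      haveI : Module.Finite R ↥A := Module.Finite.iff_fg.mpr (IsNoetherian.noetherian A)
      haveI : Finite (↥A ⧸ (maximalIdeal R • ⊤ : Submodule R ↥A)) :=
        aux_finite_quot_smul R ↥A
      have hBeq : maximalIdeal R • A ≤ B := by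
        rw [hB]
        show maximalIdeal R • A ≤ maximalIdeal R ^ (n + 1) • ⊤
        rw [pow_succ', mul_smul]
      let g : ↥A →ₗ[R] M ⧸ B := B.mkQ.comp A.subtype
      have hgmem : ∀ a : ↥A, g a ∈ A.map B.mkQ := fun a => ⟨a, a.2, rfl⟩
      let g' : ↥A →ₗ[R] ↥(A.map B.mkQ) := g.codRestrict _ hgmem
      have hcond : (maximalIdeal R • ⊤ : Submodule R ↥A) ≤ LinearMap.ker g' := by
        refine Submodule.smul_le.mpr fun r hr a _ => ?_
        rw [LinearMap.mem_ker]
        apply Subtype.ext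
        show g (r • a) = 0
        show B.mkQ ((r • a : ↥A) : M) = 0
        rw [Submodule.mkQ_apply, Submodule.Quotient.mk_eq_zero]
        exact hBeq (Submodule.smul_mem_smul hr a.2)
      have hsurj' : Function.Surjective (Submodule.liftQ _ g' hcond) := by
        rintro ⟨x, hx⟩
        obtain ⟨a, ha, rfl⟩ := hx
        exact ⟨Submodule.Quotient.mk ⟨a, ha⟩, rfl⟩
      haveI : Finite ↥(A.map B.mkQ) := Finite.of_surjective _ hsurj'
      haveI : Finite (M ⧸ A) := ih
      haveI : Finite ((M ⧸ B) ⧸ (A.map B.mkQ)) :=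
        Finite.of_equiv _ (Submodule.quotientQuotientEquivQuotient B A hBA).toEquiv.symm
      exact aux_finite_of_finite_quot (A.map B.mkQ)

variable {X : Type*} (ℱ : Ultrafilter X) (A : Type*) [Ring A]

lemma aux_ultra_const_inj {N : Type*} [AddCommGroup N] [Module A N] {v w : N}
    (h : (Submodule.Quotient.mk (fun _ => v) : Ultraproduct ℱ A (fun _ : X => N)) =
      Submodule.Quotient.mk (fun _ => w)) : v = w := by
  rw [Submodule.Quotient.eq] at h
  rw [mem_ultraZero] at h
  obtain ⟨α, hα⟩ := h.exists
  have : v - w = 0 := hα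
  exact sub_eq_zero.mp this

lemma aux_ultra_const_surj {N : Type*} [Finite N] [AddCommGroup N] [Module A N]
    (x : Ultraproduct ℱ A (fun _ : X => N)) :
    ∃ v : N, (Submodule.Quotient.mk (fun _ => v) : Ultraproduct ℱ A (fun _ : X => N)) = x := by
  obtain ⟨y, rfl⟩ := Submodule.Quotient.mk_surjective _ x
  obtain ⟨v, hv⟩ := Ultrafilter.eq_pure_of_finite (ℱ.map y)
  refine ⟨v, ?_⟩
  rw [Submodule.Quotient.eq, mem_ultraZero]
  have hmem : y ⁻¹' {v} ∈ (ℱ : Filter X) := by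
    have h1 : {v} ∈ Filter.map y (ℱ : Filter X) := by
      rw [← Ultrafilter.coe_map, hv]
      exact Filter.mem_pure.mpr rfl
    exact Filter.mem_map.mp h1
  filter_upwards [hmem] with α h
  simp only [Set.mem_preimage, Set.mem_singleton_iff] at h
  simp [h]

lemma aux_of_surjective_of_prec {R : Type*} [CommRing R] (I : Ideal R) (M : Type*)
    [AddCommGroup M] [Module R M] [IsPrecomplete I M] :
    Function.Surjective (AdicCompletion.of I M) := by
  intro x
  choose f hf using fun n => Submodule.Quotient.mk_surjective
    (I ^ n • ⊤ : Submodule R M) (x.val n)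
  have hcomp : ∀ {m n : ℕ}, m ≤ n → f m ≡ f n [SMOD (I ^ m • ⊤ : Submodule R M)] := by
    intro m n hmn
    rw [SModEq.def]
    rw [hf m]
    have := x.property hmn
    rw [← this, ← hf n]
    exact rfl
  obtain ⟨L, hL⟩ := IsPrecomplete.prec' f @hcomp
  refine ⟨L, AdicCompletion.ext fun n => ?_⟩
  rw [AdicCompletion.of_apply, ← hf n, Submodule.mkQ_apply]
  exact (SModEq.def.mp (hL n)).symm

lemma aux_of_R_smul {R : Type*} [CommRing R] (I : Ideal R) (M : Type*) [AddCommGroup M]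
    [Module R M] (s : R) (y : AdicCompletion I M) :
    AdicCompletion.of I R s • y = s • y := by
  ext n
  rw [AdicCompletion.smul_eval, AdicCompletion.val_smul, Pi.smul_apply]
  obtain ⟨m, hm⟩ := Submodule.Quotient.mk_surjective _ (y.val n)
  rw [← hm]
  exact AdicCompletion.mk_smul_mk (I ^ n) s m

lemma aux_prec_pi {R : Type*} [CommRing R] (I : Ideal R) [IsPrecomplete I R] (k : ℕ) :
    IsPrecomplete I (Fin k → R) := by
  constructor
  intro f hf
  have hproj : ∀ (m : ℕ) (x : Fin k → R), x ∈ (I ^ m • ⊤ : Submodule R (Fin k → R)) →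
      ∀ i, x i ∈ (I ^ m • ⊤ : Submodule R R) := by
    intro m x hx i
    have hle : (I ^ m • ⊤ : Submodule R (Fin k → R)).map (LinearMap.proj i) ≤
        (I ^ m • ⊤ : Submodule R R) := by
      rw [Submodule.map_smul'']
      exact Submodule.smul_mono le_rfl le_top
    exact hle ⟨x, hx, rfl⟩
  choose L hL using fun i => IsPrecomplete.prec' (I := I) (fun n => f n i)
    (fun {m n} hmn => by
      rw [SModEq.sub_mem]
      simpa using hproj m _ (SModEq.sub_mem.mp (hf hmn)) i)
  refine ⟨L, fun n => ?_⟩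
  rw [SModEq.sub_mem]
  have hcomp : ∀ i, (f n - L) i ∈ (I ^ n • ⊤ : Submodule R R) := fun i => by
    simpa using SModEq.sub_mem.mp (hL i n)
  have hx : (f n - L) = ∑ i, Pi.single i ((f n - L) i) := by
    funext j
    rw [Finset.sum_apply]
    simp [Pi.single_apply]
  rw [hx]
  apply Submodule.sum_mem
  intro i _
  have hri : (f n - L) i ∈ (I ^ n : Ideal R) := by
    have := hcomp i
    rwa [smul_eq_mul, Ideal.mul_top] at this
  have hsingle : Pi.single i ((f n - L) i) =
      (f n - L) i • (Pi.single i (1 : R) : Fin k → R) := by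
    funext j
    by_cases hij : j = i
    · subst hij; simp
    · simp [Pi.single_apply, hij]
  rw [hsingle]
  exact Submodule.smul_mem_smul hri mem_top

lemma aux_of_surjective (R : Type*) [CommRing R] (I : Ideal R)
    [IsPrecomplete I R] (M : Type*) [AddCommGroup M] [Module R M] [Module.Finite R M] :
    Function.Surjective (AdicCompletion.of I M) := by
  obtain ⟨k, p, hp⟩ := Module.Finite.exists_fin' R M
  haveI := aux_prec_pi I k
  have h1 : Function.Surjective (AdicCompletion.of I (Fin k → R)) :=
    aux_of_surjective_of_prec I _
  have h2 : Function.Surjective (AdicCompletion.map I p) := AdicCompletion.map_surjective I hp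
  have hnat : ∀ y, AdicCompletion.map I p (AdicCompletion.of I (Fin k → R) y) =
      AdicCompletion.of I M (p y) := by
    intro y
    ext n
    rw [AdicCompletion.map_val_apply, AdicCompletion.of_apply, AdicCompletion.of_apply,
      Submodule.mkQ_apply, Submodule.mkQ_apply, LinearMap.reduceModIdeal_apply]
  intro x
  obtain ⟨z, hz⟩ := h2 x
  obtain ⟨y, rfl⟩ := h1 z
  exact ⟨p y, by rw [← hnat y, hz]⟩

lemma aux_of_injective (R : Type*) [CommRing R] [IsLocalRing R] [IsNoetherianRing R]
    (M : Type*) [AddCommGroup M] [Module R M] [Module.Finite R M] :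
    Function.Injective (AdicCompletion.of (maximalIdeal R) M) := by
  intro a b hab
  have hmem : ∀ n : ℕ, a - b ∈ (maximalIdeal R ^ n • ⊤ : Submodule R M) := by
    intro n
    have := congrArg (fun z => (z : AdicCompletion (maximalIdeal R) M).val n) hab
    simp only [AdicCompletion.of_apply] at this
    rw [Submodule.mkQ_apply, Submodule.mkQ_apply] at this
    exact (Submodule.Quotient.eq _).mp this
  obtain ⟨k, p, hp⟩ := Module.Finite.exists_fin' R M
  let M₀ := (Fin k → R) ⧸ LinearMap.ker p
  let e : M ≃ₗ[R] M₀ := (p.quotKerEquivOfSurjective hp).symm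
  haveI : Module.Finite R M₀ := Module.Finite.of_surjective (LinearMap.ker p).mkQ
    (Submodule.Quotient.mk_surjective _)
  have hmem2 : e (a - b) ∈ (⨅ n : ℕ, maximalIdeal R ^ n • ⊤ : Submodule R M₀) := by
    rw [Submodule.mem_iInf]
    intro n
    have hle : (maximalIdeal R ^ n • ⊤ : Submodule R M).map (e : M →ₗ[R] M₀) ≤
        (maximalIdeal R ^ n • ⊤ : Submodule R M₀) := by
      rw [Submodule.map_smul'']
      exact Submodule.smul_mono le_rfl le_top
    exact hle ⟨a - b, hmem n, rfl⟩
  have hne : maximalIdeal R ≠ ⊤ := (IsLocalRing.maximalIdeal.isMaximal R).ne_top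
  have hbot : (⨅ n : ℕ, maximalIdeal R ^ n • ⊤ : Submodule R M₀) = ⊥ :=
    Ideal.iInf_pow_smul_eq_bot_of_isLocalRing (I := maximalIdeal R) (M := M₀) hne
  rw [hbot, Submodule.mem_bot] at hmem2
  have : a - b = 0 := by
    have := e.map_eq_zero_iff.mp hmem2
    exact this
  exact sub_eq_zero.mp this

end AuxProof

/-- Let R be a complete Noetherian local ring with finite residue field and
ℱ a non-principal ultrafilter on an infinite set X.  For a finitely generated R-module M, the
natural map from M to the patching module of the constant family with value M is an
isomorphism. -/
theorem patchDiag_bijective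
    (R : Type*) [CommRing R] [IsLocalRing R] [IsNoetherianRing R]
    [IsAdicComplete (IsLocalRing.maximalIdeal R) R] [Finite (IsLocalRing.ResidueField R)]
    {X : Type*} [Infinite X] (ℱ : Ultrafilter X) (hℱ : ∀ x : X, ℱ ≠ pure x)
    (M : Type*) [AddCommGroup M] [Module R M] [Module.Finite R M] :
    Function.Bijective (patchDiag R ℱ (X := X) M) := by
  classical
  constructor
  · intro a b hab
    apply aux_of_injective R M
    apply AdicCompletion.ext
    intro n
    have h1 : (Submodule.Quotient.mk
          (fun _ : X => (Submodule.Quotient.mk a : ModQuot R n M)) :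
        UP R ℱ (fun _ : X => M) n) =
        Submodule.Quotient.mk (fun _ : X => (Submodule.Quotient.mk b : ModQuot R n M)) :=
      congrFun (congrArg Subtype.val hab) n
    have h2 := aux_ultra_const_inj ℱ R h1
    rw [AdicCompletion.of_apply, AdicCompletion.of_apply, Submodule.mkQ_apply,
      Submodule.mkQ_apply]
    exact h2
  · rintro ⟨x, hx⟩
    rw [mem_PatchS] at hx
    have hex : ∀ n, ∃ v : ModQuot R n M,
        (Submodule.Quotient.mk (fun _ : X => v) : UP R ℱ (fun _ : X => M) n) = x n := by
      intro n
      haveI := aux_finite_modQuot R M n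
      exact aux_ultra_const_surj ℱ R (x n)
    choose v hv using hex
    have hstep : ∀ n, quotTrans R n M (v (n + 1)) = v n := by
      intro n
      have h1 : upTrans R ℱ (fun _ : X => M) n
            (Submodule.Quotient.mk (fun _ : X => v (n + 1))) =
          Submodule.Quotient.mk (fun _ : X => quotTrans R n M (v (n + 1))) := by
        rw [upTrans, ultraMap_mk]
      apply aux_ultra_const_inj ℱ R
      rw [← h1, hv (n + 1), hx n]
      exact (hv n).symm
    have hcompat : ∀ {m n : ℕ} (hmn : m ≤ n),
        AdicCompletion.transitionMap (IsLocalRing.maximalIdeal R) M hmn (v n) = v m := by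
      intro m n hmn
      induction n, hmn using Nat.le_induction with
      | base =>
          rw [← (Submodule.Quotient.mk_surjective _ (v m)).choose_spec]
          rfl
      | succ n hmn ih =>
          have hq : AdicCompletion.transitionMap (IsLocalRing.maximalIdeal R) M
              (Nat.le_succ n) (v (n + 1)) = v n := by
            obtain ⟨z, hz⟩ := Submodule.Quotient.mk_surjective _ (v (n + 1))
            have hs := hstep n
            rw [← hz, quotTrans_mk] at hs
            rw [← hz]
            exact hs
          obtain ⟨z, hz⟩ := Submodule.Quotient.mk_surjective _ (v (n + 1))
          rw [← ih, ← hq, ← hz]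
          rfl
    obtain ⟨L, hL⟩ := aux_of_surjective R (IsLocalRing.maximalIdeal R) M
      ⟨v, fun {m n} hmn => hcompat hmn⟩
    refine ⟨L, ?_⟩
    apply Subtype.ext
    funext n
    have hLn : (Submodule.Quotient.mk L : ModQuot R n M) = v n := by
      have h3 := congrArg
        (fun z => (z : AdicCompletion (IsLocalRing.maximalIdeal R) M).val n) hL
      simpa [AdicCompletion.of_apply] using h3
    show Submodule.Quotient.mk (fun _ : X => (Submodule.Quotient.mk L : ModQuot R n M)) = x n
    rw [hLn, hv n]
end

section
/- Let R be a complete Noetherian local ring with maximal ideal 𝔪 and finite residue field, X an infinite set, ℱ a non-principal ultrafilter on X, and (M_α)_{α∈X} a family of R-modules. Then for each n ≥ 1 there is a natural isomorphism of R-modules Patch_R((M_α)) / 𝔪^n Patch_R((M_α)) ≅ (∏_{α∈X} M_α/𝔪^n M_α)_ℱ, induced by the projection from the inverse limit to its n-th term. -/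
open Filter IsLocalRing

section Proj

variable (R : Type*) [CommRing R] [IsLocalRing R] {X : Type*} (ℱ : Ultrafilter X)

lemma modQuot_smul_eq_zero (n : ℕ) {M : Type*} [AddCommGroup M] [Module R M] {r : R}
    (hr : r ∈ IsLocalRing.maximalIdeal R ^ n) (q : ModQuot R n M) : r • q = 0 := by
  obtain ⟨z, rfl⟩ := Submodule.Quotient.mk_surjective _ q
  rw [← Submodule.Quotient.mk_smul, Submodule.Quotient.mk_eq_zero]
  exact Submodule.smul_mem_smul hr Submodule.mem_top

lemma up_smul_eq_zero (n : ℕ) (M : X → Type*) [∀ α, AddCommGroup (M α)]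
    [∀ α, Module R (M α)] {r : R} (hr : r ∈ IsLocalRing.maximalIdeal R ^ n)
    (u : UP R ℱ M n) : r • u = 0 := by
  obtain ⟨y, rfl⟩ := Submodule.Quotient.mk_surjective _ u
  rw [← Submodule.Quotient.mk_smul, Submodule.Quotient.mk_eq_zero]
  have hy : r • y = 0 := funext fun α => modQuot_smul_eq_zero R n hr (y α)
  rw [hy]
  exact Submodule.zero_mem _

/-- The map from the quotient of the patching module by 𝔪ⁿ to the n-th level of the patching
construction, induced by the projection from the inverse limit to its n-th term. -/
def patchProjQ (M : X → Type*) [∀ α, AddCommGroup (M α)] [∀ α, Module R (M α)] (n : ℕ) :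
    ModQuot R n ↥(PatchS R ℱ M) →ₗ[R] UP R ℱ M n :=
  Submodule.liftQ _ ((LinearMap.proj n).comp (PatchS R ℱ M).subtype) <| by
    refine Submodule.smul_le.2 fun r hr x _ => ?_
    rw [LinearMap.mem_ker]
    simp only [LinearMap.comp_apply, Submodule.subtype_apply, LinearMap.proj_apply]
    rw [Submodule.coe_smul, Pi.smul_apply]
    exact up_smul_eq_zero R ℱ n M hr _

end Proj


section SpanSmul

variable {R : Type*} [CommRing R]

lemma mem_span_finset_smul_iff {N : Type*} [AddCommGroup N] [Module R N]
    (s : Finset R) (P : Submodule R N) (x : N) :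
    x ∈ (Ideal.span (s : Set R)) • P ↔
      ∃ c : R → N, (∀ r, c r ∈ P) ∧ ∑ r ∈ s, r • c r = x := by
  constructor
  · intro hx
    refine Submodule.smul_induction_on hx ?_ ?_
    · intro r hr p hp
      obtain ⟨f, -, hf⟩ := Submodule.mem_span_finset.mp hr
      refine ⟨fun i => f i • p, fun i => P.smul_mem _ hp, ?_⟩
      rw [← hf, Finset.sum_smul]
      refine Finset.sum_congr rfl fun i _ => ?_
      simp [smul_smul, mul_comm]
    · rintro a b ⟨c, hc, rfl⟩ ⟨d, hd, rfl⟩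
      refine ⟨c + d, fun r => P.add_mem (hc r) (hd r), ?_⟩
      rw [← Finset.sum_add_distrib]
      exact Finset.sum_congr rfl fun r _ => by simp [smul_add]
  · rintro ⟨c, hc, rfl⟩
    exact Submodule.sum_mem _ fun r hr =>
      Submodule.smul_mem_smul (Ideal.subset_span hr) (hc r)

end SpanSmul

section Completion

variable (R : Type*) [CommRing R] [IsLocalRing R]

lemma modQuot_zero_eq (M : Type*) [AddCommGroup M] [Module R M]
    (q : ModQuot R 0 M) : q = 0 := by
  obtain ⟨x, rfl⟩ := Submodule.Quotient.mk_surjective _ q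
  rw [Submodule.Quotient.mk_eq_zero]
  show x ∈ (maximalIdeal R ^ 0) • (⊤ : Submodule R M)
  rw [pow_zero, Ideal.one_eq_top, Submodule.top_smul]
  trivial

lemma mPow_le (M : Type*) [AddCommGroup M] [Module R M] {m k : ℕ} (h : m ≤ k) :
    mPow R k M ≤ mPow R m M :=
  Submodule.smul_mono_left (Ideal.pow_le_pow_right h)

lemma quotTrans_surjective (n : ℕ) (M : Type*) [AddCommGroup M] [Module R M] :
    Function.Surjective (quotTrans R n M) := fun q => by
  obtain ⟨x, rfl⟩ := Submodule.Quotient.mk_surjective _ q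
  exact ⟨Submodule.Quotient.mk x, quotTrans_mk R n M x⟩

/-- The 𝔪-adic completion of `M`, realised as the inverse limit of the `M/𝔪^m`. -/
def Comp (M : Type*) [AddCommGroup M] [Module R M] :
    Submodule R (∀ m, ModQuot R m M) :=
  seqLimit R (fun m => ModQuot R m M) (fun m => quotTrans R m M)

lemma mem_Comp {M : Type*} [AddCommGroup M] [Module R M] {x : ∀ m, ModQuot R m M} :
    x ∈ Comp R M ↔ ∀ m, quotTrans R m M (x (m + 1)) = x m := Iff.rfl

open Classical in
/-- A compatible sequence extending prescribed values on levels where `D` holds. -/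
noncomputable def diagSeq {M : Type*} [AddCommGroup M] [Module R M]
    (Y : ∀ m, ModQuot R m M) (D : ℕ → Prop) : ∀ m, ModQuot R m M
  | 0 => Y 0
  | (m + 1) => if D (m + 1) then Y (m + 1) else
      (quotTrans_surjective R m M (diagSeq Y D m)).choose

lemma diagSeq_eq {M : Type*} [AddCommGroup M] [Module R M]
    (Y : ∀ m, ModQuot R m M) (D : ℕ → Prop) (m : ℕ) (hm : D m) :
    diagSeq R Y D m = Y m := by
  cases m with
  | zero => rfl
  | succ k => simp only [diagSeq, if_pos hm]

lemma diagSeq_compat {M : Type*} [AddCommGroup M] [Module R M]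
    (Y : ∀ m, ModQuot R m M) (D : ℕ → Prop)
    (hD1 : ∀ m, D (m + 1) → D m)
    (hD2 : ∀ m, D (m + 1) → quotTrans R m M (Y (m + 1)) = Y m) (m : ℕ) :
    quotTrans R m M (diagSeq R Y D (m + 1)) = diagSeq R Y D m := by
  by_cases h : D (m + 1)
  · rw [diagSeq_eq R Y D (m + 1) h, diagSeq_eq R Y D m (hD1 m h)]
    exact hD2 m h
  · simp only [diagSeq, if_neg h]
    exact (quotTrans_surjective R m M (diagSeq R Y D m)).choose_spec

lemma comp_level_zero {M : Type*} [AddCommGroup M] [Module R M]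
    (w : ∀ m, ModQuot R m M) (hw : w ∈ Comp R M) (n : ℕ) (hn : w n = 0) :
    ∀ m ≤ n, w m = 0 := by
  have key : ∀ k, w (n - k) = 0 := by
    intro k
    induction k with
    | zero => simpa using hn
    | succ k ih =>
      by_cases h : n ≤ k + 1
      · rw [Nat.sub_eq_zero_of_le h]
        exact modQuot_zero_eq R M (w 0)
      · have e : n - (k + 1) + 1 = n - k := by omega
        have h2 : w (n - (k + 1) + 1) = 0 := by rw [e]; exact ih
        rw [← (mem_Comp R).mp hw (n - (k + 1)), h2, map_zero]
  intro m hm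
  have h := key (n - m)
  rwa [Nat.sub_sub_self hm] at h

lemma comp_sub_mem {M : Type*} [AddCommGroup M] [Module R M] (s : Finset R) (n : ℕ)
    (hs : Ideal.span (s : Set R) = maximalIdeal R ^ n)
    (w : ↥(Comp R M)) (hw : (w : ∀ m, ModQuot R m M) n = 0) :
    ∃ v : R → ↥(Comp R M), ∑ r ∈ s, r • v r = w := by
  classical
  have hw' : ∀ m ≤ n, (w : ∀ m, ModQuot R m M) m = 0 := comp_level_zero R _ w.2 n hw
  have hx : ∀ m, ∃ a : M, (Submodule.Quotient.mk a : ModQuot R m M) =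
      (w : ∀ m, ModQuot R m M) m ∧ (m ≤ n → a = 0) := by
    intro m
    by_cases h : m ≤ n
    · exact ⟨0, by rw [hw' m h, Submodule.Quotient.mk_zero], fun _ => rfl⟩
    · obtain ⟨a, ha⟩ := Submodule.Quotient.mk_surjective _ ((w : ∀ m, ModQuot R m M) m)
      exact ⟨a, ha, fun hm => absurd hm h⟩
  choose x hx1 hx2 using hx
  have hδ : ∀ j, x (j + 1) - x j ∈ mPow R j M := by
    intro j
    refine (Submodule.Quotient.eq _).mp ?_
    calc (Submodule.Quotient.mk (x (j + 1)) : ModQuot R j M)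
        = quotTrans R j M (Submodule.Quotient.mk (x (j + 1))) := (quotTrans_mk R j M _).symm
      _ = quotTrans R j M ((w : ∀ m, ModQuot R m M) (j + 1)) := by rw [hx1 (j + 1)]
      _ = (w : ∀ m, ModQuot R m M) j := (mem_Comp R).mp w.2 j
      _ = Submodule.Quotient.mk (x j) := (hx1 j).symm
  have hC : ∀ j, ∃ c : R → M, (∀ r, c r ∈ mPow R (j - n) M) ∧
      ∑ r ∈ s, r • c r = x (j + 1) - x j := by
    intro j
    by_cases h : n ≤ j
    · have h1 : x (j + 1) - x j ∈ (Ideal.span (s : Set R)) • (mPow R (j - n) M) := by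
        rw [hs]
        have h2 : (maximalIdeal R ^ n) • (mPow R (j - n) M) = mPow R j M := by
          rw [← Submodule.smul_assoc, smul_eq_mul, ← pow_add, Nat.add_sub_cancel' h]
        rw [h2]
        exact hδ j
      exact (mem_span_finset_smul_iff s _ _).mp h1
    · push_neg at h
      refine ⟨0, fun r => Submodule.zero_mem _, ?_⟩
      rw [hx2 (j + 1) h, hx2 j h.le]
      simp
  choose C hC1 hC2 using hC
  have hvmem : ∀ r : R, (fun m => (Submodule.Quotient.mk
      (∑ j ∈ Finset.range (n + m), C j r) : ModQuot R m M)) ∈ Comp R M := by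
    intro r
    rw [mem_Comp]
    intro m
    rw [quotTrans_mk]
    refine (Submodule.Quotient.eq _).mpr ?_
    have e : n + (m + 1) = (n + m) + 1 := rfl
    rw [e, Finset.sum_range_succ, add_sub_cancel_left]
    have h := hC1 (n + m) r
    rwa [Nat.add_sub_cancel_left] at h
  set v : R → ↥(Comp R M) := fun r => ⟨_, hvmem r⟩ with hv
  have key : ∀ m, ∑ r ∈ s, r • ((v r : ∀ m, ModQuot R m M) m)
      = (w : ∀ m, ModQuot R m M) m := by
    intro m
    have e1 : ∀ r : R, r • ((v r : ∀ m, ModQuot R m M) m) =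
        (mPow R m M).mkQ (r • (∑ j ∈ Finset.range (n + m), C j r)) := by
      intro r
      rw [map_smul]
      rfl
    rw [Finset.sum_congr rfl (fun r _ => e1 r), ← map_sum]
    have e2 : ∑ r ∈ s, r • (∑ j ∈ Finset.range (n + m), C j r) = x (n + m) - x 0 := by
      calc ∑ r ∈ s, r • (∑ j ∈ Finset.range (n + m), C j r)
          = ∑ r ∈ s, ∑ j ∈ Finset.range (n + m), r • C j r := by
            exact Finset.sum_congr rfl fun r _ => Finset.smul_sum
        _ = ∑ j ∈ Finset.range (n + m), ∑ r ∈ s, r • C j r := Finset.sum_comm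
        _ = ∑ j ∈ Finset.range (n + m), (x (j + 1) - x j) :=
            Finset.sum_congr rfl fun j _ => hC2 j
        _ = x (n + m) - x 0 := Finset.sum_range_sub x (n + m)
    rw [e2, hx2 0 (Nat.zero_le n), sub_zero]
    have e3 : ∀ k, ((mPow R m M).mkQ (x (m + k)) : ModQuot R m M)
        = (w : ∀ m, ModQuot R m M) m := by
      intro k
      induction k with
      | zero => simpa [Submodule.mkQ_apply] using hx1 m
      | succ k ih =>
        have e4 : x (m + (k + 1)) = x (m + k) + (x ((m + k) + 1) - x (m + k)) := by
          rw [add_sub_cancel]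
          rfl
        rw [e4, map_add, ih]
        have e5 : (mPow R m M).mkQ (x ((m + k) + 1) - x (m + k)) = 0 := by
          rw [Submodule.mkQ_apply, Submodule.Quotient.mk_eq_zero]
          exact mPow_le R M (Nat.le_add_right m k) (hδ (m + k))
        rw [e5, add_zero]
    have e6 : n + m = m + n := Nat.add_comm n m
    rw [e6]
    exact e3 n
  refine ⟨v, ?_⟩
  apply Subtype.ext
  have hcoe : ((∑ r ∈ s, r • v r : ↥(Comp R M)) : ∀ m, ModQuot R m M)
      = ∑ r ∈ s, ((r • v r : ↥(Comp R M)) : ∀ m, ModQuot R m M) :=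
    map_sum (Comp R M).subtype (fun r => r • v r) s
  funext m
  rw [hcoe, Finset.sum_apply]
  have e7 : ∀ r : R, ((r • v r : ↥(Comp R M)) : ∀ m, ModQuot R m M) m
      = r • ((v r : ∀ m, ModQuot R m M) m) := fun r => rfl
  rw [Finset.sum_congr rfl (fun r _ => e7 r)]
  exact key m

end Completion

section ToPatch

variable (R : Type*) [CommRing R] [IsLocalRing R] {X : Type*} (ℱ : Ultrafilter X)

/-- From families of compatible sequences to the patching module. -/
def toPatch (M : X → Type*) [∀ α, AddCommGroup (M α)] [∀ α, Module R (M α)] :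
    (∀ α, ↥(Comp R (M α))) →ₗ[R] ↥(PatchS R ℱ M) where
  toFun w := ⟨fun m => Submodule.Quotient.mk (fun α => (w α : ∀ k, ModQuot R k (M α)) m), by
    rw [mem_PatchS]
    intro m
    simp only [upTrans]
    rw [ultraMap_mk]
    exact congrArg Submodule.Quotient.mk (funext fun α => (mem_Comp R).mp (w α).2 m)⟩
  map_add' w w' := Subtype.ext <| funext fun m => by
    show (Submodule.Quotient.mk _ : UP R ℱ M m) = Submodule.Quotient.mk _ + Submodule.Quotient.mk _
    rw [← Submodule.Quotient.mk_add]
    rfl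
  map_smul' c w := Subtype.ext <| funext fun m => by
    show (Submodule.Quotient.mk _ : UP R ℱ M m) = c • (Submodule.Quotient.mk _ : UP R ℱ M m)
    rw [← Submodule.Quotient.mk_smul]
    rfl

lemma toPatch_apply (M : X → Type*) [∀ α, AddCommGroup (M α)] [∀ α, Module R (M α)]
    (w : ∀ α, ↥(Comp R (M α))) (m : ℕ) :
    (toPatch R ℱ M w : ∀ k, UP R ℱ M k) m
      = Submodule.Quotient.mk (fun α => (w α : ∀ k, ModQuot R k (M α)) m) := rfl

lemma exists_toPatch_lift (M : X → Type*) [∀ α, AddCommGroup (M α)] [∀ α, Module R (M α)]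
    (n : ℕ) (y : ↥(PatchS R ℱ M)) (hy : (y : ∀ m, UP R ℱ M m) n = 0) :
    ∃ w : ∀ α, ↥(Comp R (M α)), toPatch R ℱ M w = y ∧
      ∀ α, (w α : ∀ m, ModQuot R m (M α)) n = 0 := by
  classical
  have hY : ∀ m, ∃ Ym : ∀ α, ModQuot R m (M α),
      (Submodule.Quotient.mk Ym : UP R ℱ M m) = (y : ∀ m, UP R ℱ M m) m ∧
        (m = n → Ym = 0) := by
    intro m
    rcases eq_or_ne m n with rfl | h
    · exact ⟨0, by rw [hy, Submodule.Quotient.mk_zero], fun _ => rfl⟩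
    · obtain ⟨a, ha⟩ := Submodule.Quotient.mk_surjective _ ((y : ∀ m, UP R ℱ M m) m)
      exact ⟨a, ha, fun hm => absurd hm h⟩
  choose Y hY1 hY2 using hY
  have hE : ∀ k, ∀ᶠ α in (ℱ : Filter X), quotTrans R k (M α) (Y (k + 1) α) = Y k α := by
    intro k
    have h1 : upTrans R ℱ M k ((y : ∀ m, UP R ℱ M m) (k + 1)) = (y : ∀ m, UP R ℱ M m) k :=
      mem_PatchS R ℱ |>.mp y.2 k
    rw [← hY1 (k + 1), ← hY1 k] at h1
    simp only [upTrans] at h1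
    rw [ultraMap_mk] at h1
    have h2 := (Submodule.Quotient.eq _).mp h1
    rw [mem_ultraZero] at h2
    filter_upwards [h2] with α hα
    have hα' : quotTrans R k (M α) (Y (k + 1) α) - Y k α = 0 := hα
    rwa [sub_eq_zero] at hα'
  set D : X → ℕ → Prop := fun α m => ∀ k < m, quotTrans R k (M α) (Y (k + 1) α) = Y k α
    with hD
  have hD1 : ∀ α m, D α (m + 1) → D α m :=
    fun α m h k hk => h k (hk.trans (Nat.lt_succ_self m))
  have hD2 : ∀ α m, D α (m + 1) → quotTrans R m (M α) (Y (m + 1) α) = Y m α :=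
    fun α m h => h m (Nat.lt_succ_self m)
  set w0 : ∀ α, ↥(Comp R (M α)) := fun α =>
    ⟨diagSeq R (fun m => Y m α) (D α), by
      rw [mem_Comp]
      intro m
      exact diagSeq_compat R _ _ (hD1 α) (hD2 α) m⟩ with hw0
  set w : ∀ α, ↥(Comp R (M α)) := fun α => if D α n then w0 α else 0 with hwdef
  have hwval : ∀ α m, D α m → D α n → (w α : ∀ m, ModQuot R m (M α)) m = Y m α := by
    intro α m hm hn
    rw [hwdef]
    simp only [if_pos hn, hw0]
    exact diagSeq_eq R _ _ m hm
  refine ⟨w, ?_, ?_⟩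
  · apply Subtype.ext
    funext m
    rw [show ((toPatch R ℱ M w : ↥(PatchS R ℱ M)) : ∀ k, UP R ℱ M k) m
        = Submodule.Quotient.mk (fun α => (w α : ∀ k, ModQuot R k (M α)) m) from rfl]
    rw [← hY1 m, Submodule.Quotient.eq, mem_ultraZero]
    have hEv : ∀ᶠ α in (ℱ : Filter X), ∀ k ∈ Finset.range (max m n),
        quotTrans R k (M α) (Y (k + 1) α) = Y k α :=
      (Filter.eventually_all_finset _).mpr fun k _ => hE k
    filter_upwards [hEv] with α hα
    have hDm : D α m := fun k hk =>
      hα k (Finset.mem_range.mpr (lt_of_lt_of_le hk (le_max_left m n)))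
    have hDn : D α n := fun k hk =>
      hα k (Finset.mem_range.mpr (lt_of_lt_of_le hk (le_max_right m n)))
    show (w α : ∀ k, ModQuot R k (M α)) m - Y m α = 0
    rw [hwval α m hDm hDn, sub_self]
  · intro α
    by_cases h : D α n
    · rw [hwval α n h h, hY2 n rfl]
      rfl
    · rw [hwdef]
      simp only [if_neg h]
      rfl

end ToPatch

/-- Let R be a complete Noetherian local ring with finite residue field and ℱ
a non-principal ultrafilter on an infinite set X.  For any family of R-modules and any n ≥ 1,
the natural map from the quotient of the patching module by 𝔪ⁿ to the ultraproduct of the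
quotients M α/𝔪ⁿ is an isomorphism. -/
theorem patchProjQ_bijective
    (R : Type*) [CommRing R] [IsLocalRing R] [IsNoetherianRing R]
    [IsAdicComplete (IsLocalRing.maximalIdeal R) R] [Finite (IsLocalRing.ResidueField R)]
    {X : Type*} [Infinite X] (ℱ : Ultrafilter X) (hℱ : ∀ x : X, ℱ ≠ pure x)
    (M : X → Type*) [∀ α, AddCommGroup (M α)] [∀ α, Module R (M α)]
    (n : ℕ) (hn : 1 ≤ n) :
    Function.Bijective (patchProjQ R ℱ M n) := by
  classical
  constructor
  · -- injectivity
    have key : ∀ z : ↥(PatchS R ℱ M), (z : ∀ m, UP R ℱ M m) n = 0 →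
        z ∈ mPow R n ↥(PatchS R ℱ M) := by
      intro z hz
      obtain ⟨s, hs⟩ := IsNoetherian.noetherian (IsLocalRing.maximalIdeal R ^ n)
      obtain ⟨w, hw1, hw2⟩ := exists_toPatch_lift R ℱ M n z hz
      have hv : ∀ α, ∃ v : R → ↥(Comp R (M α)), ∑ r ∈ s, r • v r = w α :=
        fun α => comp_sub_mem R s n hs (w α) (hw2 α)
      choose V hV using hv
      have hz2 : z = ∑ r ∈ s, r • toPatch R ℱ M (fun α => V α r) := by
        rw [← hw1]
        have e1 : ∑ r ∈ s, r • toPatch R ℱ M (fun α => V α r)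
            = toPatch R ℱ M (∑ r ∈ s, r • (fun α => V α r)) := by
          rw [map_sum]
          exact Finset.sum_congr rfl fun r _ => (map_smul (toPatch R ℱ M) r _).symm
        rw [e1]
        congr 1
        funext α
        have e2 : (∑ r ∈ s, r • (fun α => V α r)) α = ∑ r ∈ s, r • V α r := by
          rw [Finset.sum_apply]
          rfl
        rw [e2, hV α]
      rw [hz2]
      exact Submodule.sum_mem _ fun r hr =>
        Submodule.smul_mem_smul (hs ▸ Ideal.subset_span hr) Submodule.mem_top
    intro a b hab
    obtain ⟨za, rfl⟩ := Submodule.Quotient.mk_surjective _ a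
    obtain ⟨zb, rfl⟩ := Submodule.Quotient.mk_surjective _ b
    simp only [patchProjQ, Submodule.liftQ_apply, LinearMap.comp_apply,
      Submodule.subtype_apply, LinearMap.proj_apply] at hab
    rw [Submodule.Quotient.eq]
    apply key
    show ((za : ∀ m, UP R ℱ M m) - (zb : ∀ m, UP R ℱ M m)) n = 0
    rw [Pi.sub_apply, hab, sub_self]
  · -- surjectivity
    intro u
    obtain ⟨t, rfl⟩ := Submodule.Quotient.mk_surjective _ u
    have ha : ∀ α, ∃ a : M α, (Submodule.Quotient.mk a : ModQuot R n (M α)) = t α :=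
      fun α => Submodule.Quotient.mk_surjective _ (t α)
    choose a ha using ha
    set w : ∀ α, ↥(Comp R (M α)) := fun α =>
      ⟨fun m => Submodule.Quotient.mk (a α), by
        rw [mem_Comp]
        intro m
        exact quotTrans_mk R m (M α) (a α)⟩ with hwdef
    refine ⟨Submodule.Quotient.mk (toPatch R ℱ M w), ?_⟩
    simp only [patchProjQ, Submodule.liftQ_apply, LinearMap.comp_apply,
      Submodule.subtype_apply, LinearMap.proj_apply]
    rw [toPatch_apply]
    exact congrArg Submodule.Quotient.mk (funext fun α => ha α)
end

section
/- Let R be a complete Noetherian local ring with maximal ideal 𝔪 and finite residue field, X an infinite set, ℱ a non-principal ultrafilter on X, and (M_α)_{α∈X} a bounded family of R-modules, say with each M_α a quotient of R^s. Then the patching module Patch_R((M_α)) is a finitely generated R-module; indeed it is a quotient of R^s. -/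
open Filter IsLocalRing

section Aux

open CategoryTheory

/-- König's lemma for inverse sequences of nonempty finite types. -/
lemma konig_sequence {T : ℕ → Type*} [∀ n, Finite (T n)] [∀ n, Nonempty (T n)]
    (g : ∀ n, T (n + 1) → T n) : ∃ x : ∀ n, T n, ∀ n, g n (x (n + 1)) = x n := by
  let F : ℕᵒᵖ ⥤ Type _ := CategoryTheory.Functor.ofOpSequence (X := T) (fun n => TypeCat.ofHom (g n))
  haveI : ∀ j : ℕᵒᵖ, Finite (F.obj j) := fun j => inferInstanceAs (Finite (T j.unop))
  haveI : ∀ j : ℕᵒᵖ, Nonempty (F.obj j) := fun j => inferInstanceAs (Nonempty (T j.unop))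
  obtain ⟨u, hu⟩ := nonempty_sections_of_finite_inverse_system F
  refine ⟨fun n => u (Opposite.op n), fun n => ?_⟩
  have := hu (j := Opposite.op (n+1)) (j' := Opposite.op n)
    ((homOfLE (Nat.le_add_right n 1)).op)
  rwa [CategoryTheory.Functor.ofOpSequence_map_homOfLE_succ] at this

/-- A function into a finite type is constant along an ultrafilter. -/
lemma ultra_exists_const {X : Type*} (ℱ : Ultrafilter X) {F : Type*} [Finite F] (g : X → F) :
    ∃ c, ∀ᶠ α in (ℱ : Filter X), g α = c := by
  have h : (⋃ c ∈ (Set.univ : Set F), {α | g α = c}) ∈ ℱ := by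
    have : (⋃ c ∈ (Set.univ : Set F), {α | g α = c}) = Set.univ := by ext α; simp
    rw [this]; exact Filter.univ_mem
  obtain ⟨c, -, hc⟩ := (Ultrafilter.finite_biUnion_mem_iff Set.finite_univ).mp h
  exact ⟨c, hc⟩

lemma finite_of_submodule_quotient {R M : Type*} [Ring R] [AddCommGroup M] [Module R M]
    (S : Submodule R M) [Finite S] [Finite (M ⧸ S)] : Finite M := by
  haveI : ∀ q : M ⧸ S, Finite {x : M // Submodule.Quotient.mk x = q} := by
    intro q
    obtain ⟨x₀, rfl⟩ := Submodule.Quotient.mk_surjective S q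
    refine Finite.of_equiv S ⟨fun s => ⟨x₀ + s.1, ?_⟩, fun x => ⟨x.1 - x₀, ?_⟩, ?_, ?_⟩
    · rw [Submodule.Quotient.eq]; simpa using s.2
    · exact (Submodule.Quotient.eq S).mp x.2
    · intro s; ext; simp
    · intro x; ext; simp
  exact Finite.of_equiv _ (Equiv.sigmaFiberEquiv (Submodule.Quotient.mk (p := S)))

universe v

lemma finite_of_fg_torsion (R : Type*) [CommRing R] [IsLocalRing R] [IsNoetherianRing R]
    [Finite (ResidueField R)] :
    ∀ n : ℕ, ∀ (K : Type v) [AddCommGroup K] [Module R K] [Module.Finite R K],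
      (∀ r ∈ maximalIdeal R ^ n, ∀ x : K, r • x = 0) → Finite K := by
  intro n
  induction n with
  | zero =>
    intro K _ _ _ h
    have : Subsingleton K := ⟨fun a b => by
      have ha := h 1 (by simp) a
      have hb := h 1 (by simp) b
      rw [one_smul] at ha hb; rw [ha, hb]⟩
    infer_instance
  | succ n ih =>
    intro K _ _ _ h
    set S : Submodule R K := maximalIdeal R • ⊤ with hS
    haveI : IsNoetherian R K := isNoetherian_of_isNoetherianRing_of_finite R K
    haveI : Module.Finite R S := Module.Finite.iff_fg.mpr (IsNoetherian.noetherian S)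
    haveI : Finite S := by
      refine ih S ?_
      intro r hr x
      ext
      show r • (x : K) = 0
      refine Submodule.smul_induction_on x.2 (fun m hm y _ => ?_) (fun a b ha hb => ?_)
      · rw [smul_smul]
        exact h (r * m) (by rw [pow_succ]; exact Ideal.mul_mem_mul hr hm) y
      · rw [smul_add, ha, hb, add_zero]
    haveI : Finite (K ⧸ S) := by
      letI : Module (ResidueField R) (K ⧸ S) :=
        (inferInstance : Module (R ⧸ maximalIdeal R) (K ⧸ maximalIdeal R • (⊤ : Submodule R K)))
      obtain ⟨T, hT⟩ := Module.Finite.fg_top (R := R) (M := K)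
      haveI : Module.Finite (ResidueField R) (K ⧸ S) := by
        classical
        refine ⟨⟨T.image (Submodule.Quotient.mk (p := S)), ?_⟩⟩
        rw [Finset.coe_image, eq_top_iff]
        rintro q -
        obtain ⟨x, rfl⟩ := Submodule.Quotient.mk_surjective S q
        have hx : x ∈ Submodule.span R (T : Set K) := hT ▸ Submodule.mem_top
        refine Submodule.span_induction (p := fun x _ =>
          (Submodule.Quotient.mk (p := S) x) ∈
            Submodule.span (ResidueField R) (Submodule.Quotient.mk (p := S) '' (T : Set K)))
          (fun y hy => Submodule.subset_span ⟨y, hy, rfl⟩) ?_ ?_ ?_ hx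
        · simpa using Submodule.zero_mem _
        · intro a b _ _ ha hb
          rw [Submodule.Quotient.mk_add]
          exact Submodule.add_mem _ ha hb
        · intro r y _ hy
          have : (Submodule.Quotient.mk (p := S) (r • y)) =
              (Ideal.Quotient.mk (maximalIdeal R) r) • Submodule.Quotient.mk (p := S) y :=
            (Module.Quotient.mk_smul_mk K (maximalIdeal R) r y).symm
          rw [this]
          exact Submodule.smul_mem _ _ hy
      exact Module.finite_of_finite (ResidueField R)
    exact finite_of_submodule_quotient S

lemma finite_modQuot (R : Type*) [CommRing R] [IsLocalRing R] [IsNoetherianRing R]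
    [Finite (ResidueField R)] (n : ℕ) (N : Type v) [AddCommGroup N] [Module R N]
    [Module.Finite R N] : Finite (ModQuot R n N) := by
  haveI : Module.Finite R (ModQuot R n N) :=
    Module.Finite.of_surjective (mPow R n N).mkQ (Submodule.mkQ_surjective _)
  refine finite_of_fg_torsion R n (ModQuot R n N) ?_
  intro r hr x
  obtain ⟨y, rfl⟩ := Submodule.Quotient.mk_surjective _ x
  rw [← Submodule.Quotient.mk_smul, Submodule.Quotient.mk_eq_zero]
  exact Submodule.smul_mem_smul hr Submodule.mem_top

lemma mem_mPow_proj {R : Type*} [CommRing R] [IsLocalRing R] {s n : ℕ} {v : Fin s → R}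
    (hv : v ∈ mPow R n (Fin s → R)) (i : Fin s) : v i ∈ mPow R n R := by
  refine Submodule.smul_induction_on (p := fun t : Fin s → R => t i ∈ mPow R n R) hv
    (fun r hr m _ => ?_) (fun a b ha hb => ?_)
  · show (r • m) i ∈ mPow R n R
    rw [Pi.smul_apply]
    exact Submodule.smul_mem_smul hr Submodule.mem_top
  · show (a + b) i ∈ mPow R n R
    rw [Pi.add_apply]
    exact Submodule.add_mem _ ha hb

lemma mem_mPow_of_proj {R : Type*} [CommRing R] [IsLocalRing R] {s n : ℕ} {v : Fin s → R}
    (hv : ∀ i, v i ∈ mPow R n R) : v ∈ mPow R n (Fin s → R) := by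
  have hv' : v = ∑ i, Pi.single i (v i) := (Finset.univ_sum_single v).symm
  rw [hv']
  refine Submodule.sum_mem _ fun i _ => ?_
  refine Submodule.smul_induction_on
    (p := fun t : R => Pi.single i t ∈ mPow R n (Fin s → R)) (hv i)
    (fun r hr m _ => ?_) (fun a b ha hb => ?_)
  · show Pi.single i (r • m) ∈ mPow R n (Fin s → R)
    rw [Pi.single_smul]
    exact Submodule.smul_mem_smul hr Submodule.mem_top
  · show Pi.single i (a + b) ∈ mPow R n (Fin s → R)
    rw [Pi.single_add]
    exact Submodule.add_mem _ ha hb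

end Aux

section Main

variable (R : Type*) [CommRing R] [IsLocalRing R]
variable {X : Type*} (ℱ : Ultrafilter X) (M : X → Type*) [∀ α, AddCommGroup (M α)]
  [∀ α, Module R (M α)] {s : ℕ} (f : ∀ α, (Fin s → R) →ₗ[R] M α)

/-- The composite map R^s → UP n sending v to the class of (f α v mod 𝔪ⁿ). -/
def gLevel (n : ℕ) : (Fin s → R) →ₗ[R] UP R ℱ M n :=
  (ultraZero ℱ R fun α => ModQuot R n (M α)).mkQ.comp
    (LinearMap.pi fun α => (mPow R n (M α)).mkQ.comp (f α))

lemma gLevel_apply (n : ℕ) (v : Fin s → R) :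
    gLevel R ℱ M f n v =
      Submodule.Quotient.mk (fun α => Submodule.Quotient.mk (f α v)) := rfl

/-- The induced map (R/𝔪ⁿ)^s → UP n. -/
def Qmap (n : ℕ) : ModQuot R n (Fin s → R) →ₗ[R] UP R ℱ M n :=
  Submodule.liftQ _ (gLevel R ℱ M f n) (by
    intro v hv
    rw [LinearMap.mem_ker, gLevel_apply]
    have h1 : (fun α => Submodule.Quotient.mk (p := mPow R n (M α)) (f α v)) =
        (fun _ => 0) := by
      funext α
      rw [Submodule.Quotient.mk_eq_zero]
      exact mapQ_cond R (f α) n hv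
    rw [h1]
    exact Submodule.Quotient.mk_eq_zero _ |>.mpr (Submodule.zero_mem _))

lemma Qmap_mk (n : ℕ) (v : Fin s → R) :
    Qmap R ℱ M f n (Submodule.Quotient.mk v) =
      Submodule.Quotient.mk (fun α => Submodule.Quotient.mk (f α v)) := by
  rw [Qmap, Submodule.liftQ_apply, gLevel_apply]

lemma Qmap_quotTrans (n : ℕ) (q : ModQuot R (n + 1) (Fin s → R)) :
    Qmap R ℱ M f n (quotTrans R n _ q) = upTrans R ℱ M n (Qmap R ℱ M f (n + 1) q) := by
  obtain ⟨v, rfl⟩ := Submodule.Quotient.mk_surjective _ q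
  rw [quotTrans_mk, Qmap_mk, Qmap_mk]
  simp only [upTrans]
  rw [ultraMap_mk]
  exact congrArg _ (funext fun α => (quotTrans_mk R n (M α) (f α v)).symm)

lemma Qmap_surjective (hf : ∀ α, Function.Surjective (f α)) [IsNoetherianRing R]
    [Finite (ResidueField R)] (n : ℕ) : Function.Surjective (Qmap R ℱ M f n) := by
  intro u
  obtain ⟨y, rfl⟩ := Submodule.Quotient.mk_surjective _ u
  have hex : ∀ α, ∃ w : Fin s → R,
      Submodule.Quotient.mk (p := mPow R n (M α)) (f α w) = y α := by
    intro α
    obtain ⟨z, hz⟩ := Submodule.Quotient.mk_surjective _ (y α)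
    obtain ⟨w, hw⟩ := hf α z
    exact ⟨w, by rw [hw, hz]⟩
  choose w hw using hex
  haveI : Finite (ModQuot R n (Fin s → R)) := finite_modQuot R n _
  obtain ⟨c, hc⟩ := ultra_exists_const ℱ
    (fun α => Submodule.Quotient.mk (p := mPow R n (Fin s → R)) (w α))
  obtain ⟨v, rfl⟩ := Submodule.Quotient.mk_surjective _ c
  refine ⟨Submodule.Quotient.mk v, ?_⟩
  rw [Qmap_mk, Submodule.Quotient.eq, mem_ultraZero]
  filter_upwards [hc] with α hα
  have h2 : f α v - f α (w α) ∈ mPow R n (M α) := by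
    rw [← map_sub]
    refine mapQ_cond R (f α) n ?_
    exact (Submodule.Quotient.eq _).mp hα.symm
  have h3 : Submodule.Quotient.mk (p := mPow R n (M α)) (f α v) = y α := by
    rw [← hw α]
    exact (Submodule.Quotient.eq _).mpr h2
  simp [h3]

end Main

/-- The patching module of a bounded family of modules over a complete
Noetherian local ring with finite residue field is finitely generated; indeed it is a quotient
of the free module of the same rank. -/
theorem patch_of_bounded_finitely_generated
    (R : Type*) [CommRing R] [IsLocalRing R] [IsNoetherianRing R]
    [IsAdicComplete (IsLocalRing.maximalIdeal R) R] [Finite (IsLocalRing.ResidueField R)]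
    {X : Type*} [Infinite X] (ℱ : Ultrafilter X) (hℱ : ∀ x : X, ℱ ≠ pure x)
    (M : X → Type*) [∀ α, AddCommGroup (M α)] [∀ α, Module R (M α)]
    (s : ℕ) (hbdd : ∀ α, ∃ f : (Fin s → R) →ₗ[R] M α, Function.Surjective f) :
    (∃ p : (Fin s → R) →ₗ[R] ↥(PatchS R ℱ M), Function.Surjective p) ∧
      Module.Finite R ↥(PatchS R ℱ M) := by
  classical
  choose f hf using hbdd
  have hcompat : ∀ v : Fin s → R,
      (LinearMap.pi fun n => gLevel R ℱ M f n) v ∈ PatchS R ℱ M := by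
    intro v
    rw [mem_PatchS]
    intro n
    show upTrans R ℱ M n (gLevel R ℱ M f (n + 1) v) = gLevel R ℱ M f n v
    rw [gLevel_apply, gLevel_apply]
    simp only [upTrans]
    rw [ultraMap_mk]
    exact congrArg _ (funext fun α => quotTrans_mk R n (M α) (f α v))
  set p : (Fin s → R) →ₗ[R] ↥(PatchS R ℱ M) :=
    LinearMap.codRestrict _ (LinearMap.pi fun n => gLevel R ℱ M f n) hcompat with hp
  have hsurj : Function.Surjective p := by
    rintro ⟨x, hx⟩
    rw [mem_PatchS] at hx
    haveI hfin : ∀ n, Finite {c : ModQuot R n (Fin s → R) // Qmap R ℱ M f n c = x n} := by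
      intro n
      haveI := finite_modQuot R n (Fin s → R)
      infer_instance
    haveI hne : ∀ n, Nonempty {c : ModQuot R n (Fin s → R) // Qmap R ℱ M f n c = x n} := by
      intro n
      obtain ⟨c, hc⟩ := Qmap_surjective R ℱ M f hf n (x n)
      exact ⟨⟨c, hc⟩⟩
    obtain ⟨d, hd⟩ := konig_sequence
      (T := fun n => {c : ModQuot R n (Fin s → R) // Qmap R ℱ M f n c = x n})
      (fun n c => ⟨quotTrans R n _ c.1, by rw [Qmap_quotTrans, c.2, hx n]⟩)
    have hd' : ∀ n, quotTrans R n (Fin s → R) (d (n + 1)).1 = (d n).1 :=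
      fun n => congrArg Subtype.val (hd n)
    choose w hw using fun n => Submodule.Quotient.mk_surjective _ (d n).1
    have hdiff : ∀ n, w (n + 1) - w n ∈ mPow R n (Fin s → R) := by
      intro n
      rw [← Submodule.Quotient.eq]
      rw [show (Submodule.Quotient.mk (w (n + 1)) : ModQuot R n (Fin s → R)) =
        quotTrans R n (Fin s → R) (Submodule.Quotient.mk (w (n + 1))) from
        (quotTrans_mk R n _ (w (n + 1))).symm]
      rw [hw (n + 1), hd' n, hw n]
    have key : ∀ i : Fin s, ∃ L : R, ∀ n,
        w n i ≡ L [SMOD (maximalIdeal R ^ n • ⊤ : Submodule R R)] := by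
      intro i
      refine IsPrecomplete.prec (IsAdicComplete.toIsPrecomplete) ?_
      intro m n hmn
      induction n, hmn using Nat.le_induction with
      | base => exact SModEq.refl _
      | succ n hmn ihn =>
        refine ihn.trans (SModEq.symm ?_)
        rw [SModEq.sub_mem]
        have h1 : w (n + 1) i - w n i ∈ mPow R n R := by
          simpa [Pi.sub_apply] using mem_mPow_proj (hdiff n) i
        exact Submodule.smul_mono_left (Ideal.pow_le_pow_right hmn) h1
    choose L hL using key
    refine ⟨L, Subtype.ext (funext fun n => ?_)⟩
    show gLevel R ℱ M f n L = x n
    have h1 : (Submodule.Quotient.mk L : ModQuot R n (Fin s → R)) = (d n).1 := by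
      rw [← hw n, Submodule.Quotient.eq]
      refine mem_mPow_of_proj fun i => ?_
      have := (SModEq.sub_mem.mp (hL i n))
      simpa [Pi.sub_apply] using Submodule.neg_mem _ this
    calc gLevel R ℱ M f n L = Qmap R ℱ M f n (Submodule.Quotient.mk L) :=
          (Submodule.liftQ_apply _ _ _).symm
      _ = Qmap R ℱ M f n (d n).1 := by rw [h1]
      _ = x n := (d n).2
  exact ⟨⟨p, hsurj⟩, Module.Finite.of_surjective p hsurj⟩
end

section
/- Let R be a complete Noetherian local ring with maximal ideal 𝔪 and finite residue field, X an infinite set, and ℱ a non-principal ultrafilter on X. Let e : X → ℤ_{≥1} ∪ {∞} be a function such that the set {α ∈ X : e(α) < N} is finite for every integer N (with the convention 𝔪^∞ = 0). If (M_α)_{α∈X} is a bounded family of R-modules, then the family of quotient maps M_α → M_α/𝔪^{e(α)} M_α induces an isomorphism Patch_R((M_α)) → Patch_R((M_α/𝔪^{e(α)} M_α)). -/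
open Filter IsLocalRing

section MPowE

variable (R : Type*) [CommRing R] [IsLocalRing R]

/-- The submodule 𝔪^e•M for an extended natural number e, with the convention 𝔪^∞ = 0. -/
def mPowE (e : ℕ∞) (M : Type*) [AddCommGroup M] [Module R M] : Submodule R M :=
  WithTop.recTopCoe ⊥ (fun n : ℕ => mPow R n M) e

end MPowE

section Aux

lemma ultraMap_bijective {X : Type*} (ℱ : Ultrafilter X) (A : Type*) [Ring A]
    {M N : X → Type*} [∀ α, AddCommGroup (M α)] [∀ α, Module A (M α)]
    [∀ α, AddCommGroup (N α)] [∀ α, Module A (N α)] (f : ∀ α, M α →ₗ[A] N α)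
    (hsurj : ∀ α, Function.Surjective (f α))
    (hinj : ∀ᶠ α in (ℱ : Filter X), Function.Injective (f α)) :
    Function.Bijective (ultraMap ℱ A f) := by
  constructor
  · rw [injective_iff_map_eq_zero]
    intro u hu
    obtain ⟨x, rfl⟩ := Submodule.Quotient.mk_surjective _ u
    rw [ultraMap_mk] at hu
    rw [Submodule.Quotient.mk_eq_zero] at hu ⊢
    rw [mem_ultraZero] at hu ⊢
    filter_upwards [hu, hinj] with α h1 h2
    exact h2 (by simpa using h1)
  · intro u
    obtain ⟨y, rfl⟩ := Submodule.Quotient.mk_surjective _ u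
    refine ⟨Submodule.Quotient.mk (fun α => (hsurj α (y α)).choose), ?_⟩
    rw [ultraMap_mk]
    exact congrArg _ (funext fun α => (hsurj α (y α)).choose_spec)

variable (R : Type*) [CommRing R] [IsLocalRing R]

lemma mPowE_le_mPow (e : ℕ∞) (n : ℕ) (h : (n : ℕ∞) ≤ e)
    (M : Type*) [AddCommGroup M] [Module R M] : mPowE R e M ≤ mPow R n M := by
  cases e with
  | top => exact bot_le
  | coe k =>
    have hk : n ≤ k := by exact_mod_cast h
    exact Submodule.smul_mono_left (Ideal.pow_le_pow_right hk)

lemma modQuotMap_mkQ_surjective (n : ℕ) {M : Type*} [AddCommGroup M] [Module R M]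
    (p : Submodule R M) : Function.Surjective (modQuotMap R n p.mkQ) := by
  intro q
  obtain ⟨y, rfl⟩ := Submodule.Quotient.mk_surjective _ q
  obtain ⟨x, rfl⟩ := Submodule.Quotient.mk_surjective _ y
  exact ⟨Submodule.Quotient.mk x, modQuotMap_mk R n p.mkQ x⟩

lemma modQuotMap_mkQ_injective (n : ℕ) {M : Type*} [AddCommGroup M] [Module R M]
    (p : Submodule R M) (hp : p ≤ mPow R n M) :
    Function.Injective (modQuotMap R n p.mkQ) := by
  rw [injective_iff_map_eq_zero]
  intro q hq
  obtain ⟨x, rfl⟩ := Submodule.Quotient.mk_surjective _ q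
  rw [modQuotMap_mk, Submodule.Quotient.mk_eq_zero] at hq
  rw [Submodule.Quotient.mk_eq_zero]
  have hmap : mPow R n (M ⧸ p) = Submodule.map p.mkQ (mPow R n M) := by
    rw [Submodule.map_smul'', Submodule.map_top, Submodule.range_mkQ]
  rw [hmap] at hq
  obtain ⟨y, hy, hyx⟩ := hq
  have hxy : x - y ∈ p := (Submodule.Quotient.eq p).mp hyx.symm
  have hx : x = (x - y) + y := (sub_add_cancel x y).symm
  rw [hx]
  exact Submodule.add_mem _ (hp hxy) hy

end Aux

/-- Let R be a complete Noetherian local ring with finite residue field, ℱ a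
non-principal ultrafilter on an infinite set X, and e : X → ℤ≥1 ∪ {∞} a function such that
{α : e α < N} is finite for every integer N.  For a bounded family of R-modules, the family of
quotient maps M α → M α/𝔪^(e α) M α induces an isomorphism of patching modules. -/
theorem patch_quotient_by_mPowE_bijective
    (R : Type*) [CommRing R] [IsLocalRing R] [IsNoetherianRing R]
    [IsAdicComplete (IsLocalRing.maximalIdeal R) R] [Finite (IsLocalRing.ResidueField R)]
    {X : Type*} [Infinite X] (ℱ : Ultrafilter X) (hℱ : ∀ x : X, ℱ ≠ pure x)
    (e : X → ℕ∞) (he : ∀ α, 1 ≤ e α) (hefin : ∀ N : ℕ, {α | e α < N}.Finite)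
    (M : X → Type*) [∀ α, AddCommGroup (M α)] [∀ α, Module R (M α)]
    (s : ℕ) (hbdd : ∀ α, ∃ f : (Fin s → R) →ₗ[R] M α, Function.Surjective f) :
    Function.Bijective
      (patchMap R ℱ (N := fun α => M α ⧸ mPowE R (e α) (M α))
        (fun α => (mPowE R (e α) (M α)).mkQ)) := by
  have hcof : (ℱ : Filter X) ≤ cofinite := by
    rcases ℱ.le_cofinite_or_eq_pure with h | ⟨a, ha⟩
    · exact h
    · exact absurd ha (hℱ a)
  set Q : X → Type _ := fun α => M α ⧸ mPowE R (e α) (M α) with hQ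
  set f : ∀ α, M α →ₗ[R] Q α :=
    fun α => (mPowE R (e α) (M α)).mkQ with hf
  have hlevel : ∀ n, Function.Bijective
      (ultraMap ℱ R (fun α => modQuotMap R n (f α))) := by
    intro n
    apply ultraMap_bijective
    · exact fun α => modQuotMap_mkQ_surjective R n _
    · have hev : ∀ᶠ α in (ℱ : Filter X), (n : ℕ∞) ≤ e α := by
        apply hcof
        have hsub : {α | ¬ (n : ℕ∞) ≤ e α} ⊆ {α | e α < n} := fun α hα => not_le.mp hα
        exact Set.Finite.subset (hefin n) hsub
      filter_upwards [hev] with α hα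
      exact modQuotMap_mkQ_injective R n _ (mPowE_le_mPow R (e α) n hα (M α))
  have happly : ∀ (x : ↥(PatchS R ℱ M)) (n : ℕ),
      (patchMap R ℱ f x).1 n =
        ultraMap ℱ R (fun α => modQuotMap R n (f α)) (x.1 n) :=
    fun x n => rfl
  constructor
  · rw [injective_iff_map_eq_zero]
    intro x hx
    have hx1 : (patchMap R ℱ f x).1 = 0 := congrArg Subtype.val hx
    ext n
    have h0 : ultraMap ℱ R (fun α => modQuotMap R n (f α)) (x.1 n) = 0 :=
      ((happly x n).symm).trans (congrFun hx1 n)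
    exact (hlevel n).injective (by simpa using h0)
  · intro y
    have hxex : ∀ n, ∃ u, ultraMap ℱ R (fun α => modQuotMap R n (f α)) u = y.1 n :=
      fun n => (hlevel n).surjective _
    choose x hx using hxex
    have hmem : x ∈ PatchS R ℱ M := by
      rw [mem_PatchS]
      intro n
      apply (hlevel n).injective
      rw [← level_compat, hx, hx]
      exact (y.2 n)
    refine ⟨⟨x, hmem⟩, ?_⟩
    apply Subtype.ext
    funext n
    exact (happly ⟨x, hmem⟩ n).trans (hx n)
end
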